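/- For the decomposition of the one-dimensional Fermi-Hubbard Hamiltonian, [H_2, [H_3, H_1]] = v²u Σ_{i∈Λ'} Σ_{σ∈{↑,↓}} ( (h_{i−1,i+1,σ} − h_{i,i+2,σ}) · (n_{i,σ̄} − n_{i+1,σ̄}) + h̃_{i−1,i,σ} · h̃_{i,i+1,σ̄} + h̃_{i,i+1,σ} · h̃_{i+1,i+2,σ̄} ), and [H_3, [H_3, H_1]] = vu² Σ_{i∈Λ'} Σ_{σ∈{↑,↓}} h_{i,i+1,σ} · (n_{i,σ̄} − n_{i+1,σ̄})², where σ̄ denotes the flipped spin. -/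

import Mathlib

/-- The hopping term `h_{ijσ} = a_{iσ}† a_{jσ} + a_{jσ}† a_{iσ}`. -/
noncomputable def hop {E : Type*} [NormedAddCommGroup E] [InnerProductSpace ℂ E]
    [CompleteSpace E] {Λ : Type*} (a : Λ → Bool → E →L[ℂ] E) (i j : Λ) (σ : Bool) :
    E →L[ℂ] E :=
  star (a i σ) * a j σ + star (a j σ) * a i σ

/-- The signed hopping term `h̃_{ijσ} = a_{iσ}† a_{jσ} − a_{jσ}† a_{iσ}`. -/
noncomputable def shop {E : Type*} [NormedAddCommGroup E] [InnerProductSpace ℂ E]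
    [CompleteSpace E] {Λ : Type*} (a : Λ → Bool → E →L[ℂ] E) (i j : Λ) (σ : Bool) :
    E →L[ℂ] E :=
  star (a i σ) * a j σ - star (a j σ) * a i σ

/-- The number operator `n_{iσ} = a_{iσ}† a_{iσ}`. -/
noncomputable def num {E : Type*} [NormedAddCommGroup E] [InnerProductSpace ℂ E]
    [CompleteSpace E] {Λ : Type*} (a : Λ → Bool → E →L[ℂ] E) (i : Λ) (σ : Bool) :
    E →L[ℂ] E :=
  star (a i σ) * a i σ

/-- The "even-odd" kinetic term `H₁ = v Σ_{i∈Λ'} Σ_σ h_{i,i+1,σ}` of the one-dimensional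
Fermi-Hubbard Hamiltonian, with `Λ' = {0, 2, …, L−2} ⊂ ℤ/Lℤ` and spin `↑ = true`, `↓ = false`. -/
noncomputable def FH1 {E : Type*} [NormedAddCommGroup E] [InnerProductSpace ℂ E]
    [CompleteSpace E] {L : ℕ} (a : ZMod L → Bool → E →L[ℂ] E) (v : ℝ) : E →L[ℂ] E :=
  (v : ℂ) • ∑ i ∈ Finset.range (L / 2), ∑ σ : Bool,
    hop a ((2 * i : ℕ) : ZMod L) (((2 * i : ℕ) : ZMod L) + 1) σ

/-- The "odd-even" kinetic term `H₂ = v Σ_{i∈Λ'} Σ_σ h_{i−1,i,σ}`. -/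
noncomputable def FH2 {E : Type*} [NormedAddCommGroup E] [InnerProductSpace ℂ E]
    [CompleteSpace E] {L : ℕ} (a : ZMod L → Bool → E →L[ℂ] E) (v : ℝ) : E →L[ℂ] E :=
  (v : ℂ) • ∑ i ∈ Finset.range (L / 2), ∑ σ : Bool,
    hop a (((2 * i : ℕ) : ZMod L) - 1) ((2 * i : ℕ) : ZMod L) σ

/-- The interaction term `H₃ = u Σ_{i∈Λ'} (n_{i↑}n_{i↓} + n_{i+1,↑}n_{i+1,↓})`. -/
noncomputable def FH3 {E : Type*} [NormedAddCommGroup E] [InnerProductSpace ℂ E]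
    [CompleteSpace E] {L : ℕ} (a : ZMod L → Bool → E →L[ℂ] E) (u : ℝ) : E →L[ℂ] E :=
  (u : ℂ) • ∑ i ∈ Finset.range (L / 2),
    (num a ((2 * i : ℕ) : ZMod L) true * num a ((2 * i : ℕ) : ZMod L) false +
      num a (((2 * i : ℕ) : ZMod L) + 1) true * num a (((2 * i : ℕ) : ZMod L) + 1) false)


set_option linter.unusedSectionVars false
set_option maxHeartbeats 1000000

section Aux
attribute [local instance 100] LieRing.ofAssociativeRing

variable {E : Type*} [NormedAddCommGroup E] [InnerProductSpace ℂ E] [CompleteSpace E]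
variable {L : ℕ}

/-- The quadratic atom `a_{iσ}† a_{jτ}`. -/
noncomputable def QQ (a : ZMod L → Bool → E →L[ℂ] E) (i : ZMod L) (σ : Bool)
    (j : ZMod L) (τ : Bool) : E →L[ℂ] E := star (a i σ) * a j τ

variable (a : ZMod L → Bool → E →L[ℂ] E)

lemma hop_eq (i j : ZMod L) (σ : Bool) : hop a i j σ = QQ a i σ j σ + QQ a j σ i σ := rfl
lemma shop_eq (i j : ZMod L) (σ : Bool) : shop a i j σ = QQ a i σ j σ - QQ a j σ i σ := rfl
lemma num_eq (i : ZMod L) (σ : Bool) : num a i σ = QQ a i σ i σ := rfl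

lemma mul_lie'' (x y z : E →L[ℂ] E) : ⁅x * y, z⁆ = x * ⁅y, z⁆ + ⁅x, z⁆ * y := by
  simp only [Ring.lie_def]; noncomm_ring

lemma lie_mul'' (x y z : E →L[ℂ] E) : ⁅x, y * z⁆ = y * ⁅x, z⁆ + ⁅x, y⁆ * z := by
  simp only [Ring.lie_def]; noncomm_ring

lemma sum_lie'' {ι : Type*} (s : Finset ι) (f : ι → E →L[ℂ] E) (y : E →L[ℂ] E) :
    ⁅∑ i ∈ s, f i, y⁆ = ∑ i ∈ s, ⁅f i, y⁆ := by
  simp only [Ring.lie_def, Finset.sum_mul, Finset.mul_sum, ← Finset.sum_sub_distrib]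

lemma lie_sum'' {ι : Type*} (s : Finset ι) (f : ι → E →L[ℂ] E) (y : E →L[ℂ] E) :
    ⁅y, ∑ i ∈ s, f i⁆ = ∑ i ∈ s, ⁅y, f i⁆ := by
  simp only [Ring.lie_def, Finset.sum_mul, Finset.mul_sum, ← Finset.sum_sub_distrib]

variable (car1 : ∀ (i j : ZMod L) (σ τ : Bool), a i σ * a j τ + a j τ * a i σ = 0)
variable (car2 : ∀ (i j : ZMod L) (σ τ : Bool),
      a i σ * star (a j τ) + star (a j τ) * a i σ = if i = j ∧ σ = τ then 1 else 0)

include car1 car2 in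
lemma comm_QQ {i j k l : ZMod L} {σ τ ρ π : Bool} :
    ⁅QQ a i σ j τ, QQ a k ρ l π⁆
      = (if j = k ∧ τ = ρ then QQ a i σ l π else 0)
        - (if l = i ∧ π = σ then QQ a k ρ j τ else 0) := by
  have h1 : a j τ * star (a k ρ) = (if j = k ∧ τ = ρ then 1 else 0) - star (a k ρ) * a j τ :=
    eq_sub_of_add_eq (car2 j k τ ρ)
  have h2 : a l π * star (a i σ) = (if l = i ∧ π = σ then 1 else 0) - star (a i σ) * a l π :=
    eq_sub_of_add_eq (car2 l i π σ)
  have h3 : a j τ * a l π = -(a l π * a j τ) := eq_neg_of_add_eq_zero_left (car1 j l τ π)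
  have h4 : star (a i σ) * star (a k ρ) = -(star (a k ρ) * star (a i σ)) := by
    have h := congrArg star (car1 k i ρ σ)
    simp only [star_add, star_mul, star_zero] at h
    exact eq_neg_of_add_eq_zero_left h
  have key : star (a i σ) * (star (a k ρ) * a j τ) * a l π
      = star (a k ρ) * (star (a i σ) * a l π) * a j τ := by
    calc star (a i σ) * (star (a k ρ) * a j τ) * a l π
        = (star (a i σ) * star (a k ρ)) * (a j τ * a l π) := by noncomm_ring
      _ = (-(star (a k ρ) * star (a i σ))) * (-(a l π * a j τ)) := by rw [← h3, ← h4]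
      _ = star (a k ρ) * (star (a i σ) * a l π) * a j τ := by noncomm_ring
  calc ⁅QQ a i σ j τ, QQ a k ρ l π⁆
      = star (a i σ) * (a j τ * star (a k ρ)) * a l π
          - star (a k ρ) * (a l π * star (a i σ)) * a j τ := by
        simp only [QQ, Ring.lie_def]; noncomm_ring
    _ = star (a i σ) * ((if j = k ∧ τ = ρ then 1 else 0) - star (a k ρ) * a j τ) * a l π
          - star (a k ρ) * ((if l = i ∧ π = σ then 1 else 0) - star (a i σ) * a l π) * a j τ := by
        rw [h1, h2]
    _ = star (a i σ) * (if j = k ∧ τ = ρ then 1 else 0) * a l π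
          - star (a k ρ) * (if l = i ∧ π = σ then 1 else 0) * a j τ
          - (star (a i σ) * (star (a k ρ) * a j τ) * a l π
              - star (a k ρ) * (star (a i σ) * a l π) * a j τ) := by noncomm_ring
    _ = _ := by rw [key, sub_self, sub_zero]; split_ifs <;> simp [QQ, mul_assoc]

include car1 car2 in
lemma commute_QQ {i j k l : ZMod L} {σ τ ρ π : Bool}
    (h1 : ¬(j = k ∧ τ = ρ)) (h2 : ¬(l = i ∧ π = σ)) :
    Commute (QQ a i σ j τ) (QQ a k ρ l π) := by
  have h := comm_QQ a car1 car2 (i := i) (j := j) (k := k) (l := l)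
    (σ := σ) (τ := τ) (ρ := ρ) (π := π)
  rw [if_neg h1, if_neg h2, sub_zero, Ring.lie_def, sub_eq_zero] at h
  exact h

end Aux

section Aux2
attribute [local instance 100] LieRing.ofAssociativeRing

variable {E : Type*} [NormedAddCommGroup E] [InnerProductSpace ℂ E] [CompleteSpace E]
variable {L : ℕ}
variable (a : ZMod L → Bool → E →L[ℂ] E)
variable (car1 : ∀ (i j : ZMod L) (σ τ : Bool), a i σ * a j τ + a j τ * a i σ = 0)
variable (car2 : ∀ (i j : ZMod L) (σ τ : Bool),
      a i σ * star (a j τ) + star (a j τ) * a i σ = if i = j ∧ σ = τ then 1 else 0)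

include car1 car2 in
lemma commute_QQ_spin {i j k l : ZMod L} {σ τ : Bool} (h : σ ≠ τ) :
    Commute (QQ a i σ j σ) (QQ a k τ l τ) :=
  commute_QQ a car1 car2 (fun hc => h hc.2) (fun hc => h hc.2.symm)

include car1 car2 in
lemma commute_num_shop_spin {ρ σ : Bool} (h : ρ ≠ σ) (i x y : ZMod L) :
    Commute (num a i ρ) (shop a x y σ) := by
  rw [num_eq, shop_eq]
  exact (commute_QQ_spin a car1 car2 h).sub_right (commute_QQ_spin a car1 car2 h)

include car1 car2 in
lemma commute_num_hop_spin {ρ σ : Bool} (h : ρ ≠ σ) (i x y : ZMod L) :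
    Commute (num a i ρ) (hop a x y σ) := by
  rw [num_eq, hop_eq]
  exact (commute_QQ_spin a car1 car2 h).add_right (commute_QQ_spin a car1 car2 h)

include car1 car2 in
lemma commute_shop_shop_spin {ρ σ : Bool} (h : ρ ≠ σ) (i j x y : ZMod L) :
    Commute (shop a i j ρ) (shop a x y σ) := by
  rw [shop_eq, shop_eq]
  exact ((commute_QQ_spin a car1 car2 h).sub_right (commute_QQ_spin a car1 car2 h)).sub_left
    ((commute_QQ_spin a car1 car2 h).sub_right (commute_QQ_spin a car1 car2 h))

include car1 car2 in
lemma BL1 {x y : ZMod L} (hxy : x ≠ y) :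
    ⁅num a x true * num a x false + num a y true * num a y false, ∑ σ : Bool, hop a x y σ⁆
      = ∑ σ : Bool, shop a x y σ * (num a x (!σ) - num a y (!σ)) := by
  have sw1 : (num a x true - num a y true) * shop a x y false
      = shop a x y false * (num a x true - num a y true) :=
    ((commute_num_shop_spin a car1 car2 (by decide) x x y).sub_left
      (commute_num_shop_spin a car1 car2 (by decide) y x y)).eq
  simp only [Fintype.sum_bool, Bool.not_true, Bool.not_false]
  rw [← sw1]
  simp [hop_eq, shop_eq, num_eq, mul_lie'', lie_mul'', add_lie, lie_add, sub_lie, lie_sub,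
    comm_QQ a car1 car2, hxy, hxy.symm, mul_add, add_mul, mul_sub, sub_mul, mul_assoc]
  abel

end Aux2
section Aux3
attribute [local instance 100] LieRing.ofAssociativeRing

variable {E : Type*} [NormedAddCommGroup E] [InnerProductSpace ℂ E] [CompleteSpace E]
variable {L : ℕ}
variable (a : ZMod L → Bool → E →L[ℂ] E)
variable (car1 : ∀ (i j : ZMod L) (σ τ : Bool), a i σ * a j τ + a j τ * a i σ = 0)
variable (car2 : ∀ (i j : ZMod L) (σ τ : Bool),
      a i σ * star (a j τ) + star (a j τ) * a i σ = if i = j ∧ σ = τ then 1 else 0)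

include car1 car2 in
lemma BL2 {x y : ZMod L} (hxy : x ≠ y) :
    ⁅num a x true * num a x false + num a y true * num a y false,
        ∑ σ : Bool, shop a x y σ * (num a x (!σ) - num a y (!σ))⁆
      = ∑ σ : Bool, hop a x y σ * (num a x (!σ) - num a y (!σ)) ^ 2 := by
  have sw2 : (num a x true - num a y true) * hop a x y false
      = hop a x y false * (num a x true - num a y true) :=
    ((commute_num_hop_spin a car1 car2 (by decide) x x y).sub_left
      (commute_num_hop_spin a car1 car2 (by decide) y x y)).eq
  simp only [Fintype.sum_bool, Bool.not_true, Bool.not_false, pow_two]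
  rw [← mul_assoc (hop a x y true), ← mul_assoc (hop a x y false), ← sw2]
  simp [hop_eq, shop_eq, num_eq, mul_lie'', lie_mul'', add_lie, lie_add, sub_lie, lie_sub,
    comm_QQ a car1 car2, hxy, hxy.symm, mul_add, add_mul, mul_sub, sub_mul, mul_assoc]
  abel

include car1 car2 in
lemma block1 {w x y z : ZMod L} (hwx : w ≠ x) (hwy : w ≠ y) (hwz : w ≠ z)
    (hxy : x ≠ y) (hxz : x ≠ z) (hyz : y ≠ z) :
    ⁅∑ τ : Bool, hop a w x τ, ∑ σ : Bool, shop a x y σ * (num a x (!σ) - num a y (!σ))⁆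
      + ⁅∑ τ : Bool, hop a y z τ, ∑ σ : Bool, shop a x y σ * (num a x (!σ) - num a y (!σ))⁆
      = ∑ σ : Bool, ((hop a w y σ - hop a x z σ) * (num a x (!σ) - num a y (!σ))
          + shop a w x σ * shop a x y (!σ) + shop a x y σ * shop a y z (!σ)) := by
  have sw1 : shop a w x true * shop a x y false = shop a x y false * shop a w x true :=
    (commute_shop_shop_spin a car1 car2 (by decide) w x x y).eq
  have sw2 : shop a w x false * shop a x y true = shop a x y true * shop a w x false :=
    (commute_shop_shop_spin a car1 car2 (by decide) w x x y).eq
  simp only [Fintype.sum_bool, Bool.not_true, Bool.not_false]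
  rw [sw1, sw2]
  simp [hop_eq, shop_eq, num_eq, mul_lie'', lie_mul'', add_lie, lie_add, sub_lie, lie_sub,
    comm_QQ a car1 car2, hwx, hwy, hwz, hxy, hxz, hyz,
    hwx.symm, hwy.symm, hwz.symm, hxy.symm, hxz.symm, hyz.symm,
    mul_add, add_mul, mul_sub, sub_mul, mul_assoc]
  abel

include car1 car2 in
lemma V1 {p q x y : ZMod L} (h1 : p ≠ x) (h2 : p ≠ y) (h3 : q ≠ x) (h4 : q ≠ y) :
    ⁅num a p true * num a p false + num a q true * num a q false,
      ∑ σ : Bool, hop a x y σ⁆ = 0 := by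
  simp [Fintype.sum_bool, hop_eq, num_eq, mul_lie'', lie_mul'', add_lie, lie_add,
    sub_lie, lie_sub, comm_QQ a car1 car2,
    h1, h2, h3, h4, h1.symm, h2.symm, h3.symm, h4.symm]

include car1 car2 in
lemma V2 {p q x y : ZMod L} (h1 : p ≠ x) (h2 : p ≠ y) (h3 : q ≠ x) (h4 : q ≠ y) :
    ⁅num a p true * num a p false + num a q true * num a q false,
      ∑ σ : Bool, shop a x y σ * (num a x (!σ) - num a y (!σ))⁆ = 0 := by
  simp [Fintype.sum_bool, hop_eq, shop_eq, num_eq, mul_lie'', lie_mul'', add_lie, lie_add,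
    sub_lie, lie_sub, comm_QQ a car1 car2,
    h1, h2, h3, h4, h1.symm, h2.symm, h3.symm, h4.symm]

include car1 car2 in
lemma V3 {p q x y : ZMod L} (h1 : p ≠ x) (h2 : p ≠ y) (h3 : q ≠ x) (h4 : q ≠ y) :
    ⁅∑ τ : Bool, hop a p q τ,
      ∑ σ : Bool, shop a x y σ * (num a x (!σ) - num a y (!σ))⁆ = 0 := by
  simp [Fintype.sum_bool, hop_eq, shop_eq, num_eq, mul_lie'', lie_mul'', add_lie, lie_add,
    sub_lie, lie_sub, comm_QQ a car1 car2,
    h1, h2, h3, h4, h1.symm, h2.symm, h3.symm, h4.symm]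

lemma sum_lie_diag {N : ℕ} (f g : ℕ → E →L[ℂ] E)
    (hv : ∀ j ∈ Finset.range N, ∀ i ∈ Finset.range N, j ≠ i → ⁅f j, g i⁆ = 0) :
    ⁅∑ j ∈ Finset.range N, f j, ∑ i ∈ Finset.range N, g i⁆
      = ∑ i ∈ Finset.range N, ⁅f i, g i⁆ := by
  rw [sum_lie'']
  simp only [lie_sum'']
  rw [Finset.sum_comm]
  refine Finset.sum_congr rfl fun i hi => ?_
  exact Finset.sum_eq_single_of_mem i hi (fun j hj hne => hv j hj i hi hne)

lemma sum_lie_two {N : ℕ} (hN : 3 ≤ N) (f g : ℕ → E →L[ℂ] E)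
    (hv : ∀ j ∈ Finset.range N, ∀ i ∈ Finset.range N,
        j ≠ i → j ≠ (i + 1) % N → ⁅f j, g i⁆ = 0) :
    ⁅∑ j ∈ Finset.range N, f j, ∑ i ∈ Finset.range N, g i⁆
      = ∑ i ∈ Finset.range N, (⁅f i, g i⁆ + ⁅f ((i + 1) % N), g i⁆) := by
  rw [sum_lie'']
  simp only [lie_sum'']
  rw [Finset.sum_comm]
  refine Finset.sum_congr rfl fun i hi => ?_
  have hiN : i < N := Finset.mem_range.mp hi
  have hmem : (i + 1) % N ∈ Finset.range N := Finset.mem_range.mpr (Nat.mod_lt _ (by omega))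
  have hne : i ≠ (i + 1) % N := by
    rcases Nat.lt_or_ge (i + 1) N with h | h
    · rw [Nat.mod_eq_of_lt h]; omega
    · have he : i + 1 = N := by omega
      rw [he, Nat.mod_self]; omega
  exact Finset.sum_eq_add_of_mem i ((i + 1) % N) hi hmem hne
    (fun c hc h => hv c hc i hi h.1 h.2)

end Aux3
/-- **Nested commutators `[H₂,[H₃,H₁]]` and `[H₃,[H₃,H₁]]` for the 1D Fermi-Hubbard
Hamiltonian** (with `σ̄` the flipped spin):
`[H₂,[H₃,H₁]] = v²u Σ_{i∈Λ'} Σ_σ ((h_{i−1,i+1,σ} − h_{i,i+2,σ})·(n_{i,σ̄} − n_{i+1,σ̄})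
+ h̃_{i−1,i,σ}·h̃_{i,i+1,σ̄} + h̃_{i,i+1,σ}·h̃_{i+1,i+2,σ̄})` and
`[H₃,[H₃,H₁]] = vu² Σ_{i∈Λ'} Σ_σ h_{i,i+1,σ}·(n_{i,σ̄} − n_{i+1,σ̄})²`. -/
theorem nested_comm_FH2_FH3_FH1_and_FH3_FH3_FH1
    {E : Type*} [NormedAddCommGroup E] [InnerProductSpace ℂ E] [CompleteSpace E]
    {L : ℕ} (hL : Even L) (hL6 : 6 ≤ L)
    (a : ZMod L → Bool → E →L[ℂ] E)
    (car1 : ∀ (i j : ZMod L) (σ τ : Bool), a i σ * a j τ + a j τ * a i σ = 0)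
    (car2 : ∀ (i j : ZMod L) (σ τ : Bool),
      a i σ * star (a j τ) + star (a j τ) * a i σ = if i = j ∧ σ = τ then 1 else 0)
    (v u : ℝ) :
    ⁅FH2 a v, ⁅FH3 a u, FH1 a v⁆⁆
      = ((v : ℂ) ^ 2 * (u : ℂ)) • ∑ i ∈ Finset.range (L / 2), ∑ σ : Bool,
          ((hop a (((2 * i : ℕ) : ZMod L) - 1) (((2 * i : ℕ) : ZMod L) + 1) σ -
              hop a ((2 * i : ℕ) : ZMod L) (((2 * i : ℕ) : ZMod L) + 2) σ) *
            (num a ((2 * i : ℕ) : ZMod L) (!σ) - num a (((2 * i : ℕ) : ZMod L) + 1) (!σ)) +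
          shop a (((2 * i : ℕ) : ZMod L) - 1) ((2 * i : ℕ) : ZMod L) σ *
            shop a ((2 * i : ℕ) : ZMod L) (((2 * i : ℕ) : ZMod L) + 1) (!σ) +
          shop a ((2 * i : ℕ) : ZMod L) (((2 * i : ℕ) : ZMod L) + 1) σ *
            shop a (((2 * i : ℕ) : ZMod L) + 1) (((2 * i : ℕ) : ZMod L) + 2) (!σ)) ∧
    ⁅FH3 a u, ⁅FH3 a u, FH1 a v⁆⁆
      = ((v : ℂ) * (u : ℂ) ^ 2) • ∑ i ∈ Finset.range (L / 2), ∑ σ : Bool,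
          hop a ((2 * i : ℕ) : ZMod L) (((2 * i : ℕ) : ZMod L) + 1) σ *
            (num a ((2 * i : ℕ) : ZMod L) (!σ) - num a (((2 * i : ℕ) : ZMod L) + 1) (!σ)) ^ 2 := by
  letI : LieRing (E →L[ℂ] E) := LieRing.ofAssociativeRing
  haveI : NeZero L := ⟨by omega⟩
  have hNL : L / 2 * 2 = L := Nat.div_mul_cancel hL.two_dvd
  have hN3 : 3 ≤ L / 2 := by omega
  -- basic cast arithmetic
  have natc : ∀ p q : ℕ, p < L → q < L → p ≠ q → ((p : ZMod L) ≠ (q : ZMod L)) := by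
    intro p q hp hq h hc
    apply h
    have hv' := congrArg ZMod.val hc
    rwa [ZMod.val_natCast_of_lt hp, ZMod.val_natCast_of_lt hq] at hv'
  have c1 : ∀ m : ℕ, ((m + 1 : ℕ) : ZMod L) = ((m : ℕ) : ZMod L) + 1 := fun m => by
    push_cast; ring
  have c2 : ∀ m : ℕ, ((m + 2 : ℕ) : ZMod L) = ((m : ℕ) : ZMod L) + 2 := fun m => by
    push_cast; ring
  have k1 : (1 : ZMod L) ≠ 0 := by
    haveI : Fact (1 < L) := ⟨by omega⟩; exact one_ne_zero
  have k2 : (2 : ZMod L) ≠ 0 := by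
    have := natc 2 0 (by omega) (by omega) (by omega); simpa using this
  have k3 : (3 : ZMod L) ≠ 0 := by
    have := natc 3 0 (by omega) (by omega) (by omega); simpa using this
  have d01 : ∀ t : ZMod L, t ≠ t + 1 := fun t h => absurd (by linear_combination h) k1.symm
  have d02 : ∀ t : ZMod L, t ≠ t + 2 := fun t h => absurd (by linear_combination h) k2.symm
  have dw0 : ∀ t : ZMod L, t - 1 ≠ t := fun t h => absurd (by linear_combination h) k1.symm
  have dw1 : ∀ t : ZMod L, t - 1 ≠ t + 1 := fun t h => absurd (by linear_combination h) k2.symm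
  have dw2 : ∀ t : ZMod L, t - 1 ≠ t + 2 := fun t h => absurd (by linear_combination h) k3.symm
  have d12 : ∀ t : ZMod L, t + 1 ≠ t + 2 := fun t h => absurd (by linear_combination h) k1.symm
  have modeq : ∀ p q : ℕ, (p : ZMod L) = (q : ZMod L) → p % L = q % L :=
    fun p q h => (ZMod.natCast_eq_natCast_iff p q L).mp h
  -- cross-block disequalities
  have dis : ∀ j i : ℕ, j < L / 2 → i < L / 2 → j ≠ i →
      ((2 * j : ℕ) : ZMod L) ≠ ((2 * i : ℕ) : ZMod L) ∧
      ((2 * j : ℕ) : ZMod L) ≠ ((2 * i : ℕ) : ZMod L) + 1 ∧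
      ((2 * j : ℕ) : ZMod L) + 1 ≠ ((2 * i : ℕ) : ZMod L) ∧
      ((2 * j : ℕ) : ZMod L) + 1 ≠ ((2 * i : ℕ) : ZMod L) + 1 := by
    intro j i hj hi hji
    refine ⟨natc _ _ (by omega) (by omega) (by omega), ?_, ?_, ?_⟩
    · rw [← c1]; exact natc _ _ (by omega) (by omega) (by omega)
    · rw [← c1]; exact natc _ _ (by omega) (by omega) (by omega)
    · rw [← c1, ← c1]; exact natc _ _ (by omega) (by omega) (by omega)
  -- the inner commutator
  have inner : ⁅FH3 a u, FH1 a v⁆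
      = ((u : ℂ) * (v : ℂ)) • ∑ i ∈ Finset.range (L / 2), ∑ σ : Bool,
          shop a ((2 * i : ℕ) : ZMod L) (((2 * i : ℕ) : ZMod L) + 1) σ *
            (num a ((2 * i : ℕ) : ZMod L) (!σ) - num a (((2 * i : ℕ) : ZMod L) + 1) (!σ)) := by
    unfold FH3 FH1
    rw [smul_lie, lie_smul, smul_smul]
    congr 1
    have hv1 : ∀ j ∈ Finset.range (L / 2), ∀ i ∈ Finset.range (L / 2), j ≠ i →
        ⁅num a ((2 * j : ℕ) : ZMod L) true * num a ((2 * j : ℕ) : ZMod L) false +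
            num a (((2 * j : ℕ) : ZMod L) + 1) true * num a (((2 * j : ℕ) : ZMod L) + 1) false,
          ∑ σ : Bool, hop a ((2 * i : ℕ) : ZMod L) (((2 * i : ℕ) : ZMod L) + 1) σ⁆ = 0 := by
      intro j hj i hi hji
      obtain ⟨e1, e2, e3, e4⟩ := dis j i (Finset.mem_range.mp hj) (Finset.mem_range.mp hi) hji
      exact V1 a car1 car2 e1 e2 e3 e4
    rw [sum_lie_diag _ _ hv1]
    exact Finset.sum_congr rfl fun i _ =>
      BL1 a car1 car2 (d01 ((2 * i : ℕ) : ZMod L))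
  constructor
  · -- claim 1 : [H2,[H3,H1]]
    rw [inner]
    unfold FH2
    rw [smul_lie, lie_smul, smul_smul]
    have hv2 : ∀ j ∈ Finset.range (L / 2), ∀ i ∈ Finset.range (L / 2),
        j ≠ i → j ≠ (i + 1) % (L / 2) →
        ⁅∑ τ : Bool, hop a (((2 * j : ℕ) : ZMod L) - 1) ((2 * j : ℕ) : ZMod L) τ,
          ∑ σ : Bool, shop a ((2 * i : ℕ) : ZMod L) (((2 * i : ℕ) : ZMod L) + 1) σ *
            (num a ((2 * i : ℕ) : ZMod L) (!σ) -
              num a (((2 * i : ℕ) : ZMod L) + 1) (!σ))⁆ = 0 := by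
      intro j hj i hi hji hji1
      have hjN := Finset.mem_range.mp hj
      have hiN := Finset.mem_range.mp hi
      obtain ⟨e1, e2, _, _⟩ := dis j i hjN hiN hji
      have h1 : ((2 * j : ℕ) : ZMod L) - 1 ≠ ((2 * i : ℕ) : ZMod L) := by
        intro h
        have h' : ((2 * j : ℕ) : ZMod L) = ((2 * i + 1 : ℕ) : ZMod L) := by
          rw [c1]; linear_combination h
        have := modeq _ _ h'
        rw [Nat.mod_eq_of_lt (by omega), Nat.mod_eq_of_lt (by omega)] at this
        omega
      have h2 : ((2 * j : ℕ) : ZMod L) - 1 ≠ ((2 * i : ℕ) : ZMod L) + 1 := by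
        intro h
        have h' : ((2 * j : ℕ) : ZMod L) = ((2 * i + 2 : ℕ) : ZMod L) := by
          rw [c2]; linear_combination h
        have hm := modeq _ _ h'
        rw [Nat.mod_eq_of_lt (by omega)] at hm
        rcases Nat.lt_or_ge (2 * i + 2) L with hc | hc
        · rw [Nat.mod_eq_of_lt hc] at hm
          apply hji1
          have : i + 1 < L / 2 := by omega
          rw [Nat.mod_eq_of_lt this]; omega
        · have hEq : 2 * i + 2 = L := by omega
          rw [hEq, Nat.mod_self] at hm
          apply hji1
          have : i + 1 = L / 2 := by omega
          rw [this, Nat.mod_self]; omega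
      exact V3 a car1 car2 h1 h2 e1 e2
    rw [sum_lie_two hN3 _ _ hv2]
    rw [show (v : ℂ) * ((u : ℂ) * (v : ℂ)) = (v : ℂ) ^ 2 * (u : ℂ) by ring]
    congr 1
    refine Finset.sum_congr rfl fun i hi => ?_
    have hiN := Finset.mem_range.mp hi
    have h2c : ((2 * ((i + 1) % (L / 2)) : ℕ) : ZMod L) = ((2 * i : ℕ) : ZMod L) + 2 := by
      rcases Nat.lt_or_ge (i + 1) (L / 2) with h | h
      · rw [Nat.mod_eq_of_lt h]; push_cast; ring
      · have he : i + 1 = L / 2 := by omega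
        rw [he, Nat.mod_self]
        rw [← c2, show 2 * i + 2 = L by omega]
        simp
    rw [h2c]
    rw [show ((2 * i : ℕ) : ZMod L) + 2 - 1 = ((2 * i : ℕ) : ZMod L) + 1 by ring]
    exact block1 a car1 car2 (dw0 _) (dw1 _) (dw2 _) (d01 _) (d02 _) (d12 _)
  · -- claim 2 : [H3,[H3,H1]]
    rw [inner]
    unfold FH3
    rw [smul_lie, lie_smul, smul_smul]
    have hv3 : ∀ j ∈ Finset.range (L / 2), ∀ i ∈ Finset.range (L / 2), j ≠ i →
        ⁅num a ((2 * j : ℕ) : ZMod L) true * num a ((2 * j : ℕ) : ZMod L) false +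
            num a (((2 * j : ℕ) : ZMod L) + 1) true * num a (((2 * j : ℕ) : ZMod L) + 1) false,
          ∑ σ : Bool, shop a ((2 * i : ℕ) : ZMod L) (((2 * i : ℕ) : ZMod L) + 1) σ *
            (num a ((2 * i : ℕ) : ZMod L) (!σ) -
              num a (((2 * i : ℕ) : ZMod L) + 1) (!σ))⁆ = 0 := by
      intro j hj i hi hji
      obtain ⟨e1, e2, e3, e4⟩ := dis j i (Finset.mem_range.mp hj) (Finset.mem_range.mp hi) hji
      exact V2 a car1 car2 e1 e2 e3 e4
    rw [sum_lie_diag _ _ hv3]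
    rw [show (u : ℂ) * ((u : ℂ) * (v : ℂ)) = (v : ℂ) * (u : ℂ) ^ 2 by ring]
    congr 1
    exact Finset.sum_congr rfl fun i _ => BL2 a car1 car2 (d01 _)
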